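/- arXiv:1612.00316 — 6 statements merged into one kernel-verified Lean document; each statement's English description precedes it below -/
import Mathlib

section
/- Let A, B be real matrices with (A,B) stabilizable, and let P be a symmetric positive semidefinite matrix satisfying A^T P + P A − P B B^T P = −Q with Q ⪰ 0, such that A − B B^T P is Hurwitz (all eigenvalues have negative real part). Then for every real σ ≥ 1, the matrix A − σ B B^T P is Hurwitz. -/
open Matrix

open ComplexOrder

/-- A real square matrix is Hurwitz if all its complex eigenvalues have
negative real part. -/
def IsHurwitz {n : ℕ} (M : Matrix (Fin n) (Fin n) ℝ) : Prop :=
  ∀ μ ∈ spectrum ℂ (M.map (Complex.ofReal)), μ.re < 0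

/-- (A, B) is stabilizable if some state feedback makes the closed loop Hurwitz. -/
def IsStabilizable {n m : ℕ} (A : Matrix (Fin n) (Fin n) ℝ)
    (B : Matrix (Fin n) (Fin m) ℝ) : Prop :=
  ∃ K : Matrix (Fin m) (Fin n) ℝ, IsHurwitz (A + B * K)


noncomputable section Aux

/-- mapping by `ofReal` commutes with transpose/conjTranspose. -/
lemma conjTranspose_map_ofReal {k l : ℕ} (M : Matrix (Fin k) (Fin l) ℝ) :
    (M.map Complex.ofReal)ᴴ = Mᵀ.map Complex.ofReal := by
  ext i j
  simp [conjTranspose_apply, Complex.conj_ofReal]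

lemma map_ofReal_mul {k l o : ℕ} (M : Matrix (Fin k) (Fin l) ℝ) (N : Matrix (Fin l) (Fin o) ℝ) :
    (M * N).map Complex.ofReal = M.map Complex.ofReal * N.map Complex.ofReal :=
  Matrix.map_mul (f := Complex.ofRealHom)

lemma map_ofReal_smul {k l : ℕ} (σ : ℝ) (M : Matrix (Fin k) (Fin l) ℝ) :
    (σ • M).map Complex.ofReal = (σ : ℂ) • M.map Complex.ofReal := by
  ext i j
  simp [Complex.ofReal_mul]

/-- spectrum membership via eigenvectors for complex matrices. -/
lemma mem_spectrum_iff_eigen {k : ℕ} (M : Matrix (Fin k) (Fin k) ℂ) (μ : ℂ) :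
    μ ∈ spectrum ℂ M ↔ ∃ v, v ≠ 0 ∧ M *ᵥ v = μ • v := by
  rw [spectrum.mem_iff, Matrix.isUnit_iff_isUnit_det, isUnit_iff_ne_zero, not_ne_iff,
    ← Matrix.exists_mulVec_eq_zero_iff]
  constructor
  · rintro ⟨v, hv, hv2⟩
    refine ⟨v, hv, ?_⟩
    have := hv2
    rw [Matrix.sub_mulVec] at this
    have h1 : (algebraMap ℂ (Matrix (Fin k) (Fin k) ℂ)) μ *ᵥ v = μ • v := by
      simp [Algebra.algebraMap_eq_smul_one, Matrix.smul_mulVec]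
    rw [h1, sub_eq_zero] at this
    exact this.symm
  · rintro ⟨v, hv, hv2⟩
    refine ⟨v, hv, ?_⟩
    rw [Matrix.sub_mulVec, hv2]
    simp [Algebra.algebraMap_eq_smul_one, Matrix.smul_mulVec]

/-- nonnegativity of star-quadratic forms of mapped real psd matrices. -/
lemma quad_form_nonneg_real {k : ℕ} {S : Matrix (Fin k) (Fin k) ℝ} (hS : S.PosSemidef)
    (x : Fin k → ℂ) :
    ∃ t : ℝ, 0 ≤ t ∧ star x ⬝ᵥ ((S.map Complex.ofReal) *ᵥ x) = (t : ℂ) := by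
  obtain ⟨C, rfl⟩ := (by open scoped MatrixOrder Matrix.Norms.L2Operator in exact CStarAlgebra.nonneg_iff_eq_star_mul_self.mp hS.nonneg : ∃ C : Matrix (Fin k) (Fin k) ℝ, S = Cᴴ * C)
  set y := C.map Complex.ofReal *ᵥ x with hy
  have key : star x ⬝ᵥ ((Cᴴ * C).map Complex.ofReal *ᵥ x) = star y ⬝ᵥ y := by
    have hC : Cᴴ.map Complex.ofReal = (C.map Complex.ofReal)ᴴ := by
      ext i j
      simp [conjTranspose_apply, Complex.conj_ofReal]
    rw [map_ofReal_mul, hC, ← Matrix.mulVec_mulVec, Matrix.dotProduct_mulVec,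
      ← Matrix.star_mulVec]
  have hnn : 0 ≤ star y ⬝ᵥ y := dotProduct_star_self_nonneg y
  obtain ⟨hre, him⟩ := Complex.nonneg_iff.mp hnn
  refine ⟨(star y ⬝ᵥ y).re, hre, ?_⟩
  rw [key]
  exact Complex.ext (by simp) (by simp [← him])

end Aux

theorem scaled_riccati_gain_hurwitz
    {n m : ℕ} (A : Matrix (Fin n) (Fin n) ℝ) (B : Matrix (Fin n) (Fin m) ℝ)
    (P Q : Matrix (Fin n) (Fin n) ℝ)
    (hstab : IsStabilizable A B)
    (hP : P.PosSemidef) (hQ : Q.PosSemidef)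
    (hARE : Aᵀ * P + P * A - P * B * Bᵀ * P = -Q)
    (hHur : IsHurwitz (A - B * Bᵀ * P)) :
    ∀ σ : ℝ, 1 ≤ σ → IsHurwitz (A - σ • (B * Bᵀ * P)) := by
  intro σ hσ μ hμ
  by_contra hcon
  push_neg at hcon
  obtain ⟨x, hx0, hx⟩ := (mem_spectrum_iff_eigen _ μ).mp hμ
  have hPt : Pᵀ = P := by
    have h := hP.1
    ext i j
    have := congrFun (congrFun h i) j
    simpa using this
  -- the real Lyapunov identity
  have e1 : Aᵀ * P + P * A = -Q + P * B * Bᵀ * P := sub_eq_iff_eq_add.mp hARE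
  have hT : (A - σ • (B * Bᵀ * P))ᵀ = Aᵀ - σ • (P * B * Bᵀ) := by
    rw [transpose_sub, transpose_smul, Matrix.transpose_mul, Matrix.transpose_mul,
      transpose_transpose, hPt, ← Matrix.mul_assoc]
  have hNt : (A - σ • (B * Bᵀ * P))ᵀ * P + P * (A - σ • (B * Bᵀ * P))
      = -Q - (2*σ - 1) • (P * B * Bᵀ * P) := by
    rw [hT, Matrix.sub_mul, Matrix.mul_sub, Matrix.smul_mul, Matrix.mul_smul,
      Matrix.mul_assoc, ← Matrix.mul_assoc, ← Matrix.mul_assoc, ← Matrix.mul_assoc,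
      sub_add_sub_comm, e1]
    module
  -- notation
  set Mc := (A - σ • (B * Bᵀ * P)).map Complex.ofReal with hMc
  set Pc := P.map Complex.ofReal with hPc
  -- quadratic form values
  obtain ⟨pr, hpr0, hpr⟩ := quad_form_nonneg_real hP x
  obtain ⟨qr, hqr0, hqr⟩ := quad_form_nonneg_real hQ x
  set w := (Bᵀ * P).map Complex.ofReal *ᵥ x with hw
  have hrnn : 0 ≤ star w ⬝ᵥ w := dotProduct_star_self_nonneg w
  obtain ⟨hrr0, hrri⟩ := Complex.nonneg_iff.mp hrnn
  set rr := (star w ⬝ᵥ w).re with hrrdef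
  have hrr : star w ⬝ᵥ w = (rr : ℂ) := Complex.ext (by simp [hrrdef]) (by simp [← hrri])
  -- identification of r with the interesting quadratic form
  have hfact : P * B * Bᵀ * P = (Bᵀ * P)ᵀ * (Bᵀ * P) := by
    rw [Matrix.transpose_mul, hPt, transpose_transpose, Matrix.mul_assoc]
  have hBtP : ((Bᵀ * P).map Complex.ofReal)ᴴ = ((Bᵀ * P)ᵀ).map Complex.ofReal :=
    conjTranspose_map_ofReal _
  have hrform : star x ⬝ᵥ ((P * B * Bᵀ * P).map Complex.ofReal *ᵥ x) = (rr : ℂ) := by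
    rw [hfact, map_ofReal_mul, ← hBtP, ← Matrix.mulVec_mulVec, Matrix.dotProduct_mulVec,
      ← Matrix.star_mulVec, ← hw, ← hrr]
  -- evaluate the Lyapunov identity at x, first the left side
  have hmapadd : ((A - σ • (B * Bᵀ * P))ᵀ * P + P * (A - σ • (B * Bᵀ * P))).map Complex.ofReal
      = Mcᴴ * Pc + Pc * Mc := by
    rw [conjTranspose_map_ofReal]
    ext i j
    simp [Matrix.map_apply, Matrix.add_apply, Matrix.mul_apply, hMc, hPc]
  have left : star x ⬝ᵥ (((A - σ • (B * Bᵀ * P))ᵀ * P + P * (A - σ • (B * Bᵀ * P))).map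
      Complex.ofReal *ᵥ x) = ((starRingEnd ℂ) μ + μ) * pr := by
    rw [hmapadd, Matrix.add_mulVec, dotProduct_add]
    have t1 : star x ⬝ᵥ ((Mcᴴ * Pc) *ᵥ x) = (starRingEnd ℂ) μ * pr := by
      rw [← Matrix.mulVec_mulVec, Matrix.dotProduct_mulVec, ← Matrix.star_mulVec, hx,
        star_smul, smul_dotProduct, hPc, hpr, smul_eq_mul]
      rfl
    have t2 : star x ⬝ᵥ ((Pc * Mc) *ᵥ x) = μ * pr := by
      rw [← Matrix.mulVec_mulVec, hx, Matrix.mulVec_smul, dotProduct_smul, hPc, hpr,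
        smul_eq_mul]
    rw [t1, t2]
    ring
  -- now the right side
  have hmapright : ((-Q - (2*σ - 1) • (P * B * Bᵀ * P)).map Complex.ofReal)
      = -(Q.map Complex.ofReal) - ((2*σ - 1 : ℝ) : ℂ) • ((P * B * Bᵀ * P).map Complex.ofReal) := by
    ext i j
    simp only [Matrix.map_apply, Matrix.sub_apply, Matrix.neg_apply, Matrix.smul_apply,
      smul_eq_mul]
    push_cast
    ring
  have right : star x ⬝ᵥ (((A - σ • (B * Bᵀ * P))ᵀ * P + P * (A - σ • (B * Bᵀ * P))).map
      Complex.ofReal *ᵥ x) = -(qr : ℂ) - ((2*σ - 1 : ℝ) : ℂ) * rr := by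
    rw [hNt, hmapright, Matrix.sub_mulVec, dotProduct_sub, Matrix.neg_mulVec,
      dotProduct_neg, hqr, Matrix.smul_mulVec, dotProduct_smul,
      hrform]
    simp [smul_eq_mul]
  -- combine
  have key : ((2 * μ.re : ℝ) : ℂ) * pr = -(qr : ℂ) - ((2*σ - 1 : ℝ) : ℂ) * rr := by
    rw [← right, left]
    congr 1
    rw [add_comm, Complex.add_conj]
  have keyR : 2 * μ.re * pr = -qr - (2*σ - 1) * rr := by
    have := key
    push_cast at this
    exact_mod_cast key
  have hrr_zero : rr = 0 := by nlinarith
  have hw0 : w = 0 := dotProduct_star_self_eq_zero.mp (by rw [hrr, hrr_zero]; simp)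
  -- so B Bᵀ P x = 0
  have hG0 : (B * Bᵀ * P).map Complex.ofReal *ᵥ x = 0 := by
    have : (B * Bᵀ * P) = B * (Bᵀ * P) := by rw [Matrix.mul_assoc]
    rw [this, map_ofReal_mul, ← Matrix.mulVec_mulVec, ← hw, hw0, Matrix.mulVec_zero]
  have hAx : A.map Complex.ofReal *ᵥ x = μ • x := by
    have hsplit : Mc = A.map Complex.ofReal - (σ : ℂ) • (B * Bᵀ * P).map Complex.ofReal := by
      rw [hMc]
      ext i j
      simp only [Matrix.map_apply, Matrix.sub_apply, Matrix.smul_apply, smul_eq_mul]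
      push_cast
      ring
    rw [hsplit, Matrix.sub_mulVec, Matrix.smul_mulVec, hG0, smul_zero, sub_zero] at hx
    exact hx
  -- μ is an eigenvalue of the nominal closed loop
  have hmem : μ ∈ spectrum ℂ ((A - B * Bᵀ * P).map Complex.ofReal) := by
    refine (mem_spectrum_iff_eigen _ μ).mpr ⟨x, hx0, ?_⟩
    have hsplit : (A - B * Bᵀ * P).map Complex.ofReal
        = A.map Complex.ofReal - (B * Bᵀ * P).map Complex.ofReal := by
      ext i j
      simp only [Matrix.map_apply, Matrix.sub_apply]
      push_cast
      ring
    rw [hsplit, Matrix.sub_mulVec, hG0, sub_zero, hAx]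
  exact absurd (hHur μ hmem) (not_lt.mpr hcon)
end

section
/- Under the assumptions of the previous context, if (λ, v) is an eigenpair of A_cl := A − σ B B^T P with σ ≥ 1 and v^H P v = 0, then P v = 0 and (λ, v) is also an eigenpair of A_p = A − B B^T P; in particular Re(λ) < 0. -/
open Matrix

open scoped ComplexOrder in
lemma posSemidef_map_ofReal {n : ℕ} {P : Matrix (Fin n) (Fin n) ℝ}
    (hP : P.PosSemidef) : (P.map Complex.ofReal).PosSemidef := by
  obtain ⟨C, rfl⟩ : ∃ C : Matrix (Fin n) (Fin n) ℝ, P = Cᴴ * C := by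
    open scoped MatrixOrder Matrix.Norms.L2Operator in
    exact CStarAlgebra.nonneg_iff_eq_star_mul_self.mp hP.nonneg
  have h : (Cᴴ * C).map Complex.ofReal
      = (C.map Complex.ofReal)ᴴ * (C.map Complex.ofReal) := by
    ext i j
    simp [Matrix.mul_apply, Matrix.conjTranspose_apply, Complex.conj_ofReal]
  rw [h]
  exact Matrix.posSemidef_conjTranspose_mul_self _

lemma mem_spectrum_of_mulVec {n : ℕ} (M : Matrix (Fin n) (Fin n) ℂ)
    (lam : ℂ) (v : Fin n → ℂ) (hv : v ≠ 0) (h : M *ᵥ v = lam • v) :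
    lam ∈ spectrum ℂ M := by
  rw [spectrum.mem_iff]
  intro hu
  obtain ⟨u, hu'⟩ := hu
  have h0 : (algebraMap ℂ (Matrix (Fin n) (Fin n) ℂ) lam - M) *ᵥ v = 0 := by
    rw [Matrix.sub_mulVec, h, Algebra.algebraMap_eq_smul_one, Matrix.smul_mulVec,
      Matrix.one_mulVec, sub_self]
  apply hv
  have h1 : (↑u⁻¹ : Matrix (Fin n) (Fin n) ℂ) *ᵥ ((↑u : Matrix (Fin n) (Fin n) ℂ) *ᵥ v) = v := by
    rw [Matrix.mulVec_mulVec, Units.inv_mul, Matrix.one_mulVec]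
  rw [← h1, hu', h0, Matrix.mulVec_zero]

theorem eigenpair_with_Pv_zero
    {n m : ℕ} (A : Matrix (Fin n) (Fin n) ℝ) (B : Matrix (Fin n) (Fin m) ℝ)
    (P Q : Matrix (Fin n) (Fin n) ℝ)
    (hP : P.PosSemidef) (hQ : Q.PosSemidef)
    (hARE : Aᵀ * P + P * A - P * B * Bᵀ * P = -Q)
    (σ : ℝ) (hσ : 1 ≤ σ)
    (hHur : IsHurwitz (A - B * Bᵀ * P))
    (lam : ℂ) (v : Fin n → ℂ) (hv : v ≠ 0)
    (heig : ((A - σ • (B * Bᵀ * P)).map Complex.ofReal) *ᵥ v = lam • v)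
    (hPv : star v ⬝ᵥ ((P.map Complex.ofReal) *ᵥ v) = 0) :
    (P.map Complex.ofReal) *ᵥ v = 0 ∧
      ((A - B * Bᵀ * P).map Complex.ofReal) *ᵥ v = lam • v ∧
      lam.re < 0 := by
  have hPv0 : (P.map Complex.ofReal) *ᵥ v = 0 :=
    ((posSemidef_map_ofReal hP).dotProduct_mulVec_zero_iff v).mp hPv
  have hmap : ∀ (M N : Matrix (Fin n) (Fin n) ℝ),
      (M * N).map Complex.ofReal = M.map Complex.ofReal * N.map Complex.ofReal := fun M N =>
    Matrix.map_mul (f := Complex.ofRealHom)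
  have hBB : ((B * Bᵀ * P).map Complex.ofReal) *ᵥ v = 0 := by
    rw [hmap, ← Matrix.mulVec_mulVec, hPv0, Matrix.mulVec_zero]
  have hA : (A.map Complex.ofReal) *ᵥ v = lam • v := by
    have : ((A - σ • (B * Bᵀ * P)).map Complex.ofReal) *ᵥ v
        = (A.map Complex.ofReal) *ᵥ v - (σ : ℂ) • (((B * Bᵀ * P).map Complex.ofReal) *ᵥ v) := by
      have hsm : (σ • (B * Bᵀ * P)).map Complex.ofReal
          = (σ : ℂ) • ((B * Bᵀ * P).map Complex.ofReal) := by
        ext i j; simp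
      rw [Matrix.map_sub _ (by simp), hsm, Matrix.sub_mulVec, Matrix.smul_mulVec]
    rw [this, hBB, smul_zero, sub_zero] at heig
    exact heig
  have heig2 : ((A - B * Bᵀ * P).map Complex.ofReal) *ᵥ v = lam • v := by
    rw [Matrix.map_sub _ (by simp), Matrix.sub_mulVec, hBB, sub_zero, hA]
  exact ⟨hPv0, heig2, hHur lam (mem_spectrum_of_mulVec _ lam v hv heig2)⟩
end

section
/- Let P solve A^T P + P A − P B B^T P = −Q with Q ⪰ 0, let σ ≥ 1, and set A_cl = A − σ B B^T P. Then A_cl^T · (σ²/(2σ−1)) P + (σ²/(2σ−1)) P · A_cl + σ² P B B^T P = −(σ²/(2σ−1)) Q. In particular, if H satisfies the Lyapunov equation A_cl^T H + H A_cl = −σ² P B B^T P and A_cl is Hurwitz, then H ⪯ (σ²/(2σ−1)) P. -/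
open Matrix

open Filter Topology
open scoped ENNReal NNReal

lemma aux_pow_tendsto_zero {𝔸 : Type*} [NormedRing 𝔸] [NormedAlgebra ℂ 𝔸] [CompleteSpace 𝔸]
    {a : 𝔸} (h : ∀ z ∈ spectrum ℂ a, ‖z‖₊ < 1) :
    Tendsto (fun N : ℕ => a ^ N) atTop (nhds 0) := by
  have hρ : spectralRadius ℂ a < 1 := by
    rcases Set.eq_empty_or_nonempty (spectrum ℂ a) with he | hne
    · rw [spectralRadius]
      simp [he]
    · exact_mod_cast spectrum.spectralRadius_lt_of_forall_lt_of_nonempty hne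
        (r := 1) (by exact_mod_cast h)
  obtain ⟨r, hr1, hr2⟩ := ENNReal.lt_iff_exists_nnreal_btwn.mp hρ
  have hr2' : r < 1 := by exact_mod_cast hr2
  have hgel := spectrum.pow_nnnorm_pow_one_div_tendsto_nhds_spectralRadius a
  have hev : ∀ᶠ n : ℕ in atTop, ‖a ^ n‖ ≤ (r : ℝ) ^ n := by
    filter_upwards [hgel.eventually_lt_const hr1, eventually_ge_atTop 1] with n hn hn1
    have hn0 : (n : ℝ) ≠ 0 := by positivity
    have h2 := ENNReal.rpow_lt_rpow hn (show (0:ℝ) < (n:ℝ) by positivity)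
    rw [← ENNReal.rpow_mul, one_div, inv_mul_cancel₀ hn0, ENNReal.rpow_one,
      ENNReal.rpow_natCast, ← ENNReal.coe_pow, ENNReal.coe_lt_coe] at h2
    exact_mod_cast le_of_lt h2
  have : Tendsto (fun n : ℕ => ‖a ^ n‖) atTop (nhds 0) :=
    squeeze_zero' (Eventually.of_forall fun n => norm_nonneg _) hev
      (tendsto_pow_atTop_nhds_zero_of_lt_one r.coe_nonneg hr2')
  simpa using tendsto_zero_iff_norm_tendsto_zero.mpr this

attribute [local instance] Matrix.linftyOpNormedRing Matrix.linftyOpNormedAlgebra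

lemma aux_entry_tendsto {n : ℕ} (C : Matrix (Fin n) (Fin n) ℝ)
    (h : ∀ z ∈ spectrum ℂ (C.map Complex.ofReal), ‖z‖₊ < 1) (i j : Fin n) :
    Tendsto (fun N : ℕ => (C ^ N) i j) atTop (nhds 0) := by
  haveI : CompleteSpace (Matrix (Fin n) (Fin n) ℂ) :=
    inferInstanceAs (CompleteSpace (Fin n → Fin n → ℂ))
  have hC : Tendsto (fun N : ℕ => (C.map Complex.ofReal) ^ N) atTop (nhds 0) :=
    aux_pow_tendsto_zero h
  have hbd : ∀ (A : Matrix (Fin n) (Fin n) ℂ), ‖A i j‖ ≤ ‖A‖ := by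
    intro A
    have : ‖A i j‖₊ ≤ ‖A‖₊ := by
      rw [Matrix.linfty_opNNNorm_def]
      refine le_trans (Finset.single_le_sum (f := fun k => ‖A i k‖₊) (fun k _ => zero_le) (Finset.mem_univ j)) ?_
      exact Finset.le_sup (f := fun k => ∑ l, ‖A k l‖₊) (Finset.mem_univ i)
    exact_mod_cast this
  have hentry : Tendsto (fun N : ℕ => ((C.map Complex.ofReal) ^ N) i j) atTop (nhds 0) := by
    rw [tendsto_zero_iff_norm_tendsto_zero]
    exact squeeze_zero (fun N => norm_nonneg _) (fun N => hbd _) (tendsto_zero_iff_norm_tendsto_zero.mp hC)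
  have heq : ∀ N : ℕ, ((C.map Complex.ofReal) ^ N) i j = ((C ^ N) i j : ℂ) := by
    intro N
    have := map_pow (Complex.ofRealHom.mapMatrix : Matrix (Fin n) (Fin n) ℝ →+* _) C N
    simp only [RingHom.mapMatrix_apply] at this
    have h2 : (C.map Complex.ofReal) ^ N = (C ^ N).map Complex.ofReal := by
      convert this.symm using 2 <;> rfl
    rw [h2]
    rfl
  have := (Complex.continuous_re.tendsto 0).comp (hentry.congr (fun N => (heq N)))
  simpa [Function.comp_def] using this

lemma lyapunov_psd {n : ℕ} (M X R : Matrix (Fin n) (Fin n) ℝ)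
    (hM : IsHurwitz M) (hX : X.IsSymm) (hR : R.PosSemidef)
    (hlyap : Mᵀ * X + X * M = -R) : X.PosSemidef := by
  set Mc := M.map Complex.ofReal with hMc
  -- eigenvalue criterion via determinants
  have hsp : ∀ z : ℂ, (z • (1 : Matrix (Fin n) (Fin n) ℂ) - Mc).det = 0 → z.re < 0 := by
    intro z hz
    apply hM
    rw [spectrum.mem_iff, Algebra.algebraMap_eq_smul_one, Matrix.isUnit_iff_isUnit_det,
      isUnit_iff_ne_zero]
    simpa using hz
  -- 1 - M is invertible
  have hdet1 : IsUnit (1 - M).det := by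
    rw [isUnit_iff_ne_zero]
    intro h0
    have h2 := RingHom.map_det Complex.ofRealHom (1 - M)
    rw [h0, map_zero, map_sub, _root_.map_one] at h2
    have h1 : ((1:ℂ) • (1 : Matrix (Fin n) (Fin n) ℂ) - Mc).det = 0 := by
      rw [one_smul]
      rw [hMc]
      have : Complex.ofRealHom.mapMatrix M = M.map Complex.ofReal := rfl
      rw [← this]
      exact h2.symm
    have := hsp 1 h1
    norm_num at this
  set W := (1 - M)⁻¹ with hWdef
  have hW1 : (1 - M) * W = 1 := Matrix.mul_nonsing_inv _ hdet1
  have hW2 : W * (1 - M) = 1 := Matrix.nonsing_inv_mul _ hdet1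
  set C := (1 + M) * W with hCdef
  -- spectrum of the Cayley transform
  have hspec : ∀ z ∈ spectrum ℂ (C.map Complex.ofReal), ‖z‖₊ < 1 := by
    intro μ hμ
    rw [spectrum.mem_iff, Algebra.algebraMap_eq_smul_one] at hμ
    rw [Matrix.isUnit_iff_isUnit_det, isUnit_iff_ne_zero, not_ne_iff] at hμ
    set φ : Matrix (Fin n) (Fin n) ℝ →+* Matrix (Fin n) (Fin n) ℂ :=
      Complex.ofRealHom.mapMatrix with hφdef
    have hφM : φ M = Mc := rfl
    have hW1c : (1 - Mc) * φ W = 1 := by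
      have h3 := congrArg φ hW1
      rw [_root_.map_mul, map_sub, _root_.map_one, hφM] at h3
      exact h3
    have hCc : C.map Complex.ofReal = (1 + Mc) * φ W := by
      show φ C = _
      rw [hCdef, _root_.map_mul, map_add, _root_.map_one, hφM]
    have hWcdet : (φ W).det ≠ 0 := by
      intro h
      have h4 := congrArg Matrix.det hW1c
      rw [Matrix.det_mul, h, mul_zero, Matrix.det_one] at h4
      norm_num at h4
    have hfact : μ • (1 : Matrix (Fin n) (Fin n) ℂ) - C.map Complex.ofReal
        = ((μ - 1) • 1 - (μ + 1) • Mc) * φ W := by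
      rw [hCc]
      have h5 : μ • (1 : Matrix (Fin n) (Fin n) ℂ) = (μ • (1 - Mc)) * φ W := by
        rw [smul_mul_assoc, hW1c]
      rw [h5, ← sub_mul]
      congr 1
      module
    rw [hfact, Matrix.det_mul] at hμ
    have hdμ : ((μ - 1) • (1 : Matrix (Fin n) (Fin n) ℂ) - (μ + 1) • Mc).det = 0 := by
      rcases mul_eq_zero.mp hμ with h | h
      · exact h
      · exact absurd h hWcdet
    have hμ1 : μ + 1 ≠ 0 := by
      intro h
      have hm : μ = -1 := by linear_combination h
      rw [h, zero_smul, sub_zero, hm,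
        show ((-1 : ℂ) - 1) = -2 by norm_num,
        Matrix.det_smul, Matrix.det_one, mul_one] at hdμ
      exact pow_ne_zero _ (by norm_num : (-2 : ℂ) ≠ 0) hdμ
    set lam := (μ - 1) / (μ + 1) with hlam
    have hfac2 : (μ - 1) • (1 : Matrix (Fin n) (Fin n) ℂ) - (μ + 1) • Mc
        = (μ + 1) • (lam • 1 - Mc) := by
      rw [smul_sub, smul_smul, hlam, mul_div_cancel₀ _ hμ1]
    rw [hfac2, Matrix.det_smul] at hdμ
    have hdlam : (lam • (1 : Matrix (Fin n) (Fin n) ℂ) - Mc).det = 0 := by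
      rcases mul_eq_zero.mp hdμ with h | h
      · exact absurd h (pow_ne_zero _ hμ1)
      · exact h
    have hre := hsp lam hdlam
    have hden : 0 < Complex.normSq (μ + 1) := Complex.normSq_pos.mpr hμ1
    rw [hlam, Complex.div_re, ← add_div] at hre
    have hnum : (μ - 1).re * (μ + 1).re + (μ - 1).im * (μ + 1).im < 0 := by
      rcases div_neg_iff.mp hre with ⟨_, h⟩ | ⟨h, _⟩
      · exact absurd hden (not_lt.mpr (le_of_lt h))
      · exact h
    have habs : ‖μ‖ < 1 := by
      have h2 : Complex.normSq μ < 1 := by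
        simp only [Complex.sub_re, Complex.add_re, Complex.sub_im, Complex.add_im,
          Complex.one_re, Complex.one_im] at hnum
        rw [Complex.normSq_apply]
        nlinarith [hnum]
      nlinarith [norm_nonneg μ, Complex.sq_norm μ]
    rw [← NNReal.coe_lt_coe]
    push_cast
    exact habs
  -- Stein identity
  have ht1 : Wᵀ * (1 - Mᵀ) = 1 := by
    have := congrArg Matrix.transpose hW1
    simpa [Matrix.transpose_mul, Matrix.transpose_sub] using this
  have hCt : Cᵀ = Wᵀ * (1 + Mᵀ) := by
    simp [hCdef, Matrix.transpose_mul, Matrix.transpose_add]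
  have e1 : (1 - Mᵀ) * X * (1 - M) - (1 + Mᵀ) * X * (1 + M) = R + R := by
    have expand : (1 - Mᵀ) * X * (1 - M) - (1 + Mᵀ) * X * (1 + M)
        = -(Mᵀ * X + X * M) - (Mᵀ * X + X * M) := by noncomm_ring
    rw [expand, hlyap]
    abel
  have e2 : (1 + Mᵀ) * X * (1 + M) = (1 - Mᵀ) * X * (1 - M) - (R + R) := by
    rw [← e1]; abel
  have key : Cᵀ * X * C + Wᵀ * (R + R) * W = X := by
    calc Cᵀ * X * C + Wᵀ * (R + R) * W
        = Wᵀ * ((1 + Mᵀ) * X * (1 + M)) * W + Wᵀ * (R + R) * W := by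
          rw [hCt, hCdef]; noncomm_ring
      _ = Wᵀ * ((1 - Mᵀ) * X * (1 - M)) * W := by rw [e2]; noncomm_ring
      _ = (Wᵀ * (1 - Mᵀ)) * X * ((1 - M) * W) := by noncomm_ring
      _ = X := by rw [ht1, hW1, one_mul, mul_one]
  -- quadratic form argument
  refine posSemidef_iff_dotProduct_mulVec.mpr ⟨?_, ?_⟩
  · show Xᴴ = X
    ext i j
    simp only [Matrix.conjTranspose_apply, star_trivial]
    exact hX.apply i j
  intro x
  set u : ℕ → (Fin n → ℝ) := fun N => (C ^ N) *ᵥ x with hu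
  set s : ℕ → ℝ := fun N => u N ⬝ᵥ (X *ᵥ u N) with hs
  have hstep : ∀ N, s (N + 1) ≤ s N := by
    intro N
    have hCu : C *ᵥ u N = u (N + 1) := by
      rw [hu]
      simp only [Matrix.mulVec_mulVec, ← pow_succ']
    have hq : u N ⬝ᵥ ((Cᵀ * X * C) *ᵥ u N) = s (N + 1) := by
      rw [← Matrix.mulVec_mulVec, ← Matrix.mulVec_mulVec, Matrix.dotProduct_mulVec _ Cᵀ,
        Matrix.vecMul_transpose, hCu, hs]
    have hr2 : 0 ≤ u N ⬝ᵥ ((Wᵀ * (R + R) * W) *ᵥ u N) := by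
      rw [← Matrix.mulVec_mulVec, ← Matrix.mulVec_mulVec, Matrix.dotProduct_mulVec _ Wᵀ,
        Matrix.vecMul_transpose]
      have h1 := hR.dotProduct_mulVec_nonneg (W *ᵥ u N)
      rw [star_trivial] at h1
      have : (R + R) *ᵥ (W *ᵥ u N) = R *ᵥ (W *ᵥ u N) + R *ᵥ (W *ᵥ u N) := by
        rw [Matrix.add_mulVec]
      rw [this, dotProduct_add]
      linarith
    have : s N = s (N + 1) + u N ⬝ᵥ ((Wᵀ * (R + R) * W) *ᵥ u N) := by
      have hX' : X *ᵥ u N = (Cᵀ * X * C) *ᵥ u N + (Wᵀ * (R + R) * W) *ᵥ u N := by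
        rw [← Matrix.add_mulVec, key]
      simp only [hs]
      rw [hX', dotProduct_add, hq]
    linarith
  have hmono : ∀ N, s N ≤ s 0 := by
    intro N
    induction N with
    | zero => exact le_refl _
    | succ k ih => exact le_trans (hstep k) ih
  have hulim : ∀ i, Tendsto (fun N => u N i) atTop (nhds 0) := by
    intro i
    simp only [hu, Matrix.mulVec, dotProduct]
    have : ∀ j : Fin n, Tendsto (fun N => (C ^ N) i j * x j) atTop (nhds 0) := by
      intro j
      simpa using (aux_entry_tendsto C hspec i j).mul_const (x j)
    simpa using tendsto_finset_sum Finset.univ fun j _ => this j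
  have hslim : Tendsto s atTop (nhds 0) := by
    have : ∀ N, s N = ∑ i, u N i * ∑ j, X i j * u N j := by
      intro N
      simp [hs, dotProduct, Matrix.mulVec]
    rw [funext this]
    have : Tendsto (fun N => ∑ i, u N i * ∑ j, X i j * u N j) atTop
        (nhds (∑ i : Fin n, 0 * ∑ j : Fin n, X i j * 0)) := by
      refine tendsto_finset_sum _ fun i _ => ?_
      exact (hulim i).mul (tendsto_finset_sum _ fun j _ => tendsto_const_nhds.mul (hulim j))
    simpa using this
  have h0 : (0 : ℝ) ≤ s 0 := le_of_tendsto hslim (Eventually.of_forall hmono)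
  rw [star_trivial]
  simpa [hs, hu] using h0

theorem energy_upper_bound
    {n m : ℕ} (A : Matrix (Fin n) (Fin n) ℝ) (B : Matrix (Fin n) (Fin m) ℝ)
    (P Q H : Matrix (Fin n) (Fin n) ℝ)
    (hP : P.PosSemidef) (hQ : Q.PosSemidef)
    (hARE : Aᵀ * P + P * A - P * B * Bᵀ * P = -Q)
    (σ : ℝ) (hσ : 1 ≤ σ)
    (hHur : IsHurwitz (A - σ • (B * Bᵀ * P)))
    (hH : H.IsSymm) :
    (A - σ • (B * Bᵀ * P))ᵀ * ((σ ^ 2 / (2 * σ - 1)) • P) +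
        ((σ ^ 2 / (2 * σ - 1)) • P) * (A - σ • (B * Bᵀ * P)) +
          σ ^ 2 • (P * B * Bᵀ * P) = -((σ ^ 2 / (2 * σ - 1)) • Q) ∧
    ((A - σ • (B * Bᵀ * P))ᵀ * H + H * (A - σ • (B * Bᵀ * P)) =
        -(σ ^ 2 • (P * B * Bᵀ * P)) →
      ((σ ^ 2 / (2 * σ - 1)) • P - H).PosSemidef) := by
  have hden : 0 < 2 * σ - 1 := by linarith
  set c : ℝ := σ ^ 2 / (2 * σ - 1) with hc
  have hPt : Pᵀ = P := by
    ext i j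
    have := congrFun (congrFun hP.1 i) j
    simpa [Matrix.conjTranspose_apply] using this
  have hT : (A - σ • (B * Bᵀ * P))ᵀ = Aᵀ - σ • (P * (B * Bᵀ)) := by
    rw [Matrix.transpose_sub, Matrix.transpose_smul]
    congr 1
    rw [Matrix.transpose_mul, Matrix.transpose_mul, Matrix.transpose_transpose, hPt]
  have hAtP : Aᵀ * P = -Q + P * (B * (Bᵀ * P)) - P * A := by
    have h := hARE
    rw [sub_eq_iff_eq_add] at h
    have h2 := eq_sub_of_add_eq h
    rw [h2]
    simp only [Matrix.mul_assoc]
  have h1 : (A - σ • (B * Bᵀ * P))ᵀ * (c • P) +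
        (c • P) * (A - σ • (B * Bᵀ * P)) +
          σ ^ 2 • (P * B * Bᵀ * P) = -(c • Q) := by
    rw [hT]
    simp only [Matrix.sub_mul, Matrix.mul_sub, smul_mul_assoc, mul_smul_comm, smul_smul,
      Matrix.mul_assoc]
    rw [hAtP]
    have hne : 2 * σ - 1 ≠ 0 := ne_of_gt hden
    match_scalars
    · ring
    · have hne' : (-1 : ℝ) + σ * 2 ≠ 0 := fun hh => hne (by linarith)
      have hdd : (-1 + σ * 2) * (-1 + σ * 2)⁻¹ = 1 := mul_inv_cancel₀ hne'
      linear_combination (-σ ^ 2) * hdd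
    · ring
  refine ⟨h1, fun hH2 => ?_⟩
  have h1' : (A - σ • (B * Bᵀ * P))ᵀ * (c • P) + (c • P) * (A - σ • (B * Bᵀ * P))
      = -(c • Q) - σ ^ 2 • (P * B * Bᵀ * P) := eq_sub_of_add_eq h1
  have hlyap : (A - σ • (B * Bᵀ * P))ᵀ * (c • P - H) + (c • P - H) * (A - σ • (B * Bᵀ * P))
      = -(c • Q) := by
    have hsplit : (A - σ • (B * Bᵀ * P))ᵀ * (c • P - H) + (c • P - H) * (A - σ • (B * Bᵀ * P))
        = ((A - σ • (B * Bᵀ * P))ᵀ * (c • P) + (c • P) * (A - σ • (B * Bᵀ * P)))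
          - ((A - σ • (B * Bᵀ * P))ᵀ * H + H * (A - σ • (B * Bᵀ * P))) := by
      rw [Matrix.mul_sub, Matrix.sub_mul]
      abel
    rw [hsplit, h1', hH2]
    abel
  have hXsym : (c • P - H).IsSymm := by
    rw [Matrix.IsSymm, Matrix.transpose_sub, Matrix.transpose_smul, hPt, hH]
  have hRpsd : (c • Q).PosSemidef := by
    refine posSemidef_iff_dotProduct_mulVec.mpr ⟨?_, ?_⟩
    · show (c • Q)ᴴ = c • Q
      rw [Matrix.conjTranspose_smul, hQ.1]
      norm_num
    · intro x
      have := hQ.dotProduct_mulVec_nonneg x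
      rw [Matrix.smul_mulVec, dotProduct_smul]
      exact mul_nonneg (by positivity) this
  exact lyapunov_psd _ _ _ hHur hXsym hRpsd hlyap
end

section
/- Let P₀ ⪰ 0 solve A^T P₀ + P₀ A − P₀ B B^T P₀ = 0 and let P ⪰ 0 solve A^T P + P A − P B B^T P = −Q with Q ⪰ 0. For σ ≥ 1 set A_cl = A − σ B B^T P and suppose A_cl is Hurwitz. If H is the symmetric solution of A_cl^T H + H A_cl = −σ² P B B^T P, then H ⪰ P₀. -/
open Matrix

open NormedSpace Filter Finset Topology

attribute [local instance] Matrix.linftyOpNormedRing Matrix.linftyOpNormedAlgebra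

set_option maxHeartbeats 1000000

lemma scalar_decay {μ : ℂ} (hμ : μ.re < 0) (k : ℕ) :
    Tendsto (fun t : ℝ => Complex.exp ((t:ℂ)*μ) * (t:ℂ)^k * ((Nat.factorial k : ℂ))⁻¹)
      atTop (𝓝 0) := by
  rw [tendsto_zero_iff_norm_tendsto_zero]
  have ha : (0:ℝ) < -μ.re := by linarith
  have h1 : Tendsto (fun t : ℝ => ((-μ.re) * t)^k * Real.exp (-((-μ.re) * t))) atTop (𝓝 0) :=
    (Real.tendsto_pow_mul_exp_neg_atTop_nhds_zero k).comp (tendsto_id.const_mul_atTop ha)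
  have h2 : Tendsto (fun t : ℝ => ((-μ.re)^k)⁻¹ * (((-μ.re) * t)^k * Real.exp (-((-μ.re) * t)))
      * ((Nat.factorial k : ℝ))⁻¹) atTop (𝓝 0) := by
    simpa using (h1.const_mul ((-μ.re)^k)⁻¹).mul_const ((Nat.factorial k : ℝ))⁻¹
  apply h2.congr'
  filter_upwards [Filter.eventually_ge_atTop (0:ℝ)] with t ht
  have : ‖Complex.exp ((t:ℂ)*μ)‖ = Real.exp (t * μ.re) := by
    rw [Complex.norm_exp]
    norm_num
  rw [norm_mul, norm_mul, this, norm_pow, norm_inv]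
  simp only [Complex.norm_real, Complex.norm_natCast, Real.norm_eq_abs]
  rw [abs_of_nonneg ht]
  rw [mul_pow, neg_mul, neg_neg]
  field_simp


lemma exp_mulVec_eq {n : ℕ} (Mc : Matrix (Fin n) (Fin n) ℂ) (μ : ℂ)
    {v : Fin n → ℂ} {K : ℕ} (hv : ((Mc - μ • 1) ^ K) *ᵥ v = 0) (t : ℝ) :
    exp ((t:ℂ) • Mc) *ᵥ v =
      ∑ k ∈ range K, (Complex.exp ((t:ℂ)*μ) * ((t:ℂ)^k * ((Nat.factorial k : ℂ))⁻¹)) •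
        (((Mc - μ • 1) ^ k) *ᵥ v) := by
  set N := Mc - μ • 1 with hN
  have hsplit : (t:ℂ) • Mc = ((t:ℂ)*μ) • (1 : Matrix (Fin n) (Fin n) ℂ) + (t:ℂ) • N := by
    rw [hN, smul_sub, smul_smul]; abel
  have hcomm : Commute (((t:ℂ)*μ) • (1 : Matrix (Fin n) (Fin n) ℂ)) ((t:ℂ) • N) :=
    (Commute.one_left ((t:ℂ) • N)).smul_left _
  have hexp : exp ((t:ℂ) • Mc)
      = Complex.exp ((t:ℂ)*μ) • exp ((t:ℂ) • N) := by
    rw [hsplit, Matrix.exp_add_of_commute _ _ hcomm]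
    have h1 : (((t:ℂ)*μ) • (1 : Matrix (Fin n) (Fin n) ℂ))
        = algebraMap ℂ (Matrix (Fin n) (Fin n) ℂ) ((t:ℂ)*μ) := by
      rw [Algebra.algebraMap_eq_smul_one]
    rw [h1]; erw [← algebraMap_exp_comm (𝕂 := ℂ)]; rw [Algebra.algebraMap_eq_smul_one, smul_mul_assoc, one_mul,
      Complex.exp_eq_exp_ℂ]
  -- mulVec as a continuous linear map
  let L : Matrix (Fin n) (Fin n) ℂ →ₗ[ℂ] (Fin n → ℂ) :=
    { toFun := fun A => A *ᵥ v
      map_add' := fun A B => Matrix.add_mulVec A B v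
      map_smul' := fun c A => Matrix.smul_mulVec c A v }
  let Lc : Matrix (Fin n) (Fin n) ℂ →L[ℂ] (Fin n → ℂ) := LinearMap.toContinuousLinearMap L
  have hLc : ∀ A : Matrix (Fin n) (Fin n) ℂ, Lc A = A *ᵥ v := fun _ => rfl
  have hsum : Summable fun k : ℕ => ((Nat.factorial k : ℂ))⁻¹ • ((t:ℂ) • N) ^ k :=
    expSeries_summable' _
  have h2 : exp ((t:ℂ) • N) *ᵥ v
      = ∑' k : ℕ, (((t:ℂ)^k * ((Nat.factorial k : ℂ))⁻¹)) • (N ^ k *ᵥ v) := by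
    rw [exp_eq_tsum (𝕂 := ℂ), ← hLc, Lc.map_tsum hsum]
    exact tsum_congr fun k => by
      rw [hLc, smul_pow, smul_mulVec, smul_mulVec, smul_smul, mul_comm]
  have h3 : ∀ k ∉ range K, (((t:ℂ)^k * ((Nat.factorial k : ℂ))⁻¹)) • (N ^ k *ᵥ v) = 0 := by
    intro k hk
    rw [mem_range, not_lt] at hk
    have : N ^ k *ᵥ v = 0 := by
      have : N ^ k = N ^ (k - K) * N ^ K := by rw [← pow_add]; congr 1; omega
      rw [this, ← Matrix.mulVec_mulVec, hv, Matrix.mulVec_zero]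
    rw [this, smul_zero]
  rw [hexp, smul_mulVec, h2, tsum_eq_sum h3, Finset.smul_sum]
  refine Finset.sum_congr rfl fun k _ => ?_
  rw [smul_smul]

lemma complex_decay {n : ℕ} (Mc : Matrix (Fin n) (Fin n) ℂ)
    (h : ∀ μ ∈ spectrum ℂ Mc, μ.re < 0) (v : Fin n → ℂ) :
    Tendsto (fun t : ℝ => exp ((t:ℂ) • Mc) *ᵥ v) atTop (𝓝 0) := by
  let S : Submodule ℂ (Fin n → ℂ) :=
    { carrier := {w | Tendsto (fun t : ℝ => exp ((t:ℂ) • Mc) *ᵥ w) atTop (𝓝 0)}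
      add_mem' := fun {a b} ha hb => by
        simpa [Matrix.mulVec_add] using ha.add hb
      zero_mem' := by simpa [Matrix.mulVec_zero] using (tendsto_const_nhds :
        Tendsto (fun _ : ℝ => (0 : Fin n → ℂ)) atTop (𝓝 0))
      smul_mem' := fun c {a} ha => by
        simpa [Matrix.mulVec_smul] using ha.const_smul c }
  suffices hS : v ∈ S from hS
  have htop := Module.End.iSup_maxGenEigenspace_eq_top (Matrix.toLinAlgEquiv' Mc)
  have hle : (⨆ μ, Module.End.maxGenEigenspace (Matrix.toLinAlgEquiv' Mc) μ) ≤ S := by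
    refine iSup_le fun μ => ?_
    intro w hw
    rw [Module.End.mem_maxGenEigenspace] at hw
    obtain ⟨K, hK⟩ := hw
    have hNw : ((Mc - μ • 1) ^ K) *ᵥ w = 0 := by
      have : ((Matrix.toLinAlgEquiv' Mc - μ • 1) ^ K) w
          = ((Mc - μ • 1) ^ K) *ᵥ w := by
        rw [show Matrix.toLinAlgEquiv' Mc - μ • 1
            = Matrix.toLinAlgEquiv' (Mc - μ • 1) by
          simp [map_sub, _root_.map_smul, _root_.map_one]]
        rw [← map_pow]
        rfl
      rw [← this, hK]
    -- if the eigenspace is nontrivial, μ is in the spectrum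
    by_cases hw0 : w = 0
    · simpa [hw0] using S.zero_mem
    have hμ : μ.re < 0 := by
      apply h
      rw [← AlgEquiv.spectrum_eq (Matrix.toLinAlgEquiv' : Matrix (Fin n) (Fin n) ℂ ≃ₐ[ℂ] _) Mc,
        ← Module.End.hasEigenvalue_iff_mem_spectrum]
      refine Module.End.hasEigenvalue_of_hasGenEigenvalue (k := K) ?_
      show Module.End.genEigenspace (Matrix.toLinAlgEquiv' Mc) μ (K : ℕ∞) ≠ ⊥
      rw [Submodule.ne_bot_iff]
      exact ⟨w, Module.End.mem_genEigenspace_nat.mpr (LinearMap.mem_ker.mpr hK), hw0⟩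
    show Tendsto _ _ _
    rw [funext fun t => exp_mulVec_eq Mc μ hNw t]
    have : Tendsto (fun t : ℝ => ∑ k ∈ range K,
        (Complex.exp ((t:ℂ)*μ) * ((t:ℂ)^k * ((Nat.factorial k : ℂ))⁻¹)) •
          (((Mc - μ • 1) ^ k) *ᵥ w)) atTop (𝓝 0) := by
      rw [show (0 : Fin n → ℂ) = ∑ k ∈ range K, (0 : Fin n → ℂ) by simp]
      refine tendsto_finset_sum _ fun k _ => ?_
      have hc : Tendsto (fun t : ℝ => Complex.exp ((t:ℂ)*μ) * ((t:ℂ)^k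
          * ((Nat.factorial k : ℂ))⁻¹)) atTop (𝓝 0) := by
        simpa [mul_assoc] using scalar_decay hμ k
      simpa using hc.smul_const (((Mc - μ • 1) ^ k) *ᵥ w)
    exact this
  exact hle (htop.symm ▸ Submodule.mem_top)

lemma real_decay {n : ℕ} (M : Matrix (Fin n) (Fin n) ℝ) (h : IsHurwitz M) (x : Fin n → ℝ) :
    Tendsto (fun t : ℝ => exp (t • M) *ᵥ x) atTop (𝓝 0) := by
  set Mc := M.map (Complex.ofReal) with hMc
  have hdec := complex_decay Mc h (fun i => (x i : ℂ))
  have key : ∀ t : ℝ, exp ((t:ℂ) • Mc) *ᵥ (fun i => (x i : ℂ))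
      = fun i => ((exp (t • M) *ᵥ x) i : ℂ) := by
    intro t
    have hmap : (t:ℂ) • Mc = (t • M).map (Complex.ofReal) := by
      ext i j
      simp [hMc, Matrix.map_apply]
    have hexp : exp ((t:ℂ) • Mc) = (exp (t • M)).map (Complex.ofReal) := by
      rw [hmap]
      have hcont : Continuous fun A : Matrix (Fin n) (Fin n) ℝ =>
          A.map (Complex.ofReal) := Continuous.matrix_map continuous_id Complex.continuous_ofReal
      have := map_exp ((algebraMap ℝ ℂ).mapMatrix) hcont (t • M)
      exact this.symm
    rw [hexp]
    ext i
    simp [Matrix.mulVec, dotProduct, Matrix.map_apply]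
  rw [tendsto_pi_nhds]
  intro i
  have h2 : Tendsto (fun t : ℝ => ((exp (t • M) *ᵥ x) i : ℂ)) atTop (𝓝 0) := by
    have := hdec
    rw [tendsto_pi_nhds] at this
    have h3 := this i
    simp_rw [key] at h3
    exact h3
  have := (Complex.continuous_re.tendsto 0).comp h2
  simpa [Function.comp_def] using this

lemma dot_mulVec_left {n k : ℕ} (M : Matrix (Fin n) (Fin k) ℝ) (u : Fin k → ℝ) (y : Fin n → ℝ) :
    (M *ᵥ u) ⬝ᵥ y = u ⬝ᵥ (Mᵀ *ᵥ y) := by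
  rw [dotProduct_comm, dotProduct_mulVec, dotProduct_comm,
    Matrix.mulVec_transpose]

lemma quad_identity {n : ℕ} (M X R : Matrix (Fin n) (Fin n) ℝ)
    (hL : Mᵀ * X + X * M = -R) (y : Fin n → ℝ) :
    (M *ᵥ y) ⬝ᵥ (X *ᵥ y) + y ⬝ᵥ (X *ᵥ (M *ᵥ y)) = -(y ⬝ᵥ (R *ᵥ y)) := by
  rw [dot_mulVec_left, Matrix.mulVec_mulVec, Matrix.mulVec_mulVec,
    ← dotProduct_add, ← Matrix.add_mulVec, hL, Matrix.neg_mulVec,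
    dotProduct_neg]

lemma lyapunov {n : ℕ} (M X R : Matrix (Fin n) (Fin n) ℝ) (hHur : IsHurwitz M)
    (hX : X.IsSymm) (hR : ∀ y : Fin n → ℝ, 0 ≤ y ⬝ᵥ (R *ᵥ y))
    (hL : Mᵀ * X + X * M = -R) : X.PosSemidef := by
  rw [Matrix.posSemidef_iff_dotProduct_mulVec]
  constructor
  · rw [Matrix.IsHermitian]
    ext i j
    simpa using congrFun (congrFun hX i) j
  intro x
  rw [star_trivial]
  let u : ℝ → (Fin n → ℝ) := fun t => exp (t • M) *ᵥ x
  let f : ℝ → ℝ := fun t => u t ⬝ᵥ (X *ᵥ u t)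
  -- mulVec by X as a CLM
  let XC : (Fin n → ℝ) →L[ℝ] (Fin n → ℝ) := LinearMap.toContinuousLinearMap (Matrix.mulVecLin X)
  have hXC : ∀ y, XC y = X *ᵥ y := fun _ => rfl
  -- mulVec-by-x as CLM on matrices
  let L : Matrix (Fin n) (Fin n) ℝ →ₗ[ℝ] (Fin n → ℝ) :=
    { toFun := fun A => A *ᵥ x
      map_add' := fun A B => Matrix.add_mulVec A B x
      map_smul' := fun c A => Matrix.smul_mulVec c A x }
  let Lc := LinearMap.toContinuousLinearMap L
  have hu : ∀ t, HasDerivAt u (M *ᵥ u t) t := by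
    intro t
    have hE : HasDerivAt (fun s : ℝ => exp (s • M)) (exp (t • M) * M) t :=
      hasDerivAt_exp_smul_const M t
    have := Lc.hasFDerivAt.comp_hasDerivAt t hE
    have hcomm : exp (t • M) * M = M * exp (t • M) :=
      (((Commute.refl M).smul_left t).exp_left).eq
    have heq : Lc (exp (t • M) * M) = M *ᵥ u t := by
      show (exp (t • M) * M) *ᵥ x = M *ᵥ u t
      rw [hcomm, ← Matrix.mulVec_mulVec]
    replace this := this.congr_deriv heq
    exact this
  have hf : ∀ t, HasDerivAt f (-(u t ⬝ᵥ (R *ᵥ u t))) t := by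
    intro t
    have hderiv : HasDerivAt f ((M *ᵥ u t) ⬝ᵥ (X *ᵥ u t) + u t ⬝ᵥ (X *ᵥ (M *ᵥ u t))) t := by
      have hsum : HasDerivAt (fun s => ∑ i, u s i * (XC (u s)) i)
          (∑ i, ((M *ᵥ u t) i * (XC (u t)) i + u t i * (XC (M *ᵥ u t)) i)) t := by
        apply HasDerivAt.fun_sum
        intro i _
        have hp := (ContinuousLinearMap.proj (R := ℝ) (φ := fun _ : Fin n => ℝ)
          i).hasFDerivAt.comp_hasDerivAt t (hu t)
        have h1 : HasDerivAt (fun s => u s i) ((M *ᵥ u t) i) t := hp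
        have hp2 := ((ContinuousLinearMap.proj (R := ℝ) (φ := fun _ : Fin n => ℝ)
          i).comp XC).hasFDerivAt.comp_hasDerivAt t (hu t)
        have h2 : HasDerivAt (fun s => (XC (u s)) i) ((XC (M *ᵥ u t)) i) t := hp2
        exact h1.mul h2
      have : (∑ i, ((M *ᵥ u t) i * (XC (u t)) i + u t i * (XC (M *ᵥ u t)) i))
          = (M *ᵥ u t) ⬝ᵥ (X *ᵥ u t) + u t ⬝ᵥ (X *ᵥ (M *ᵥ u t)) := by
        rw [Finset.sum_add_distrib]
        rfl
      rw [← this]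
      exact hsum
    rwa [quad_identity M X R hL (u t)] at hderiv
  have hanti : Antitone f := by
    apply antitone_of_deriv_nonpos
    · exact fun t => (hf t).differentiableAt
    · intro t
      rw [(hf t).deriv]
      simpa using hR (u t)
  have hulim : Tendsto u atTop (𝓝 0) := real_decay M hHur x
  have hflim : Tendsto f atTop (𝓝 0) := by
    have hcont : Continuous fun y : Fin n → ℝ => y ⬝ᵥ (X *ᵥ y) := by
      have : (fun y : Fin n → ℝ => y ⬝ᵥ (X *ᵥ y))
          = fun y => ∑ i, y i * (XC y) i := rfl
      rw [this]
      exact continuous_finset_sum _ fun i _ =>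
        (continuous_apply i).mul ((continuous_apply i).comp XC.continuous)
    have := (hcont.tendsto 0).comp hulim
    simpa [Matrix.mulVec_zero, Function.comp_def] using this
  have hf0 : f 0 = x ⬝ᵥ (X *ᵥ x) := by
    show (exp ((0:ℝ) • M) *ᵥ x) ⬝ᵥ (X *ᵥ (exp ((0:ℝ) • M) *ᵥ x)) = _
    rw [zero_smul, exp_zero, Matrix.one_mulVec]
  have : (0:ℝ) ≤ f 0 := by
    apply le_of_tendsto hflim
    filter_upwards [Filter.eventually_ge_atTop (0:ℝ)] with t ht
    exact hanti ht
  rwa [hf0] at this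

theorem energy_lower_bound
    {n m : ℕ} (A : Matrix (Fin n) (Fin n) ℝ) (B : Matrix (Fin n) (Fin m) ℝ)
    (P P₀ Q H : Matrix (Fin n) (Fin n) ℝ)
    (hP : P.PosSemidef) (hP₀ : P₀.PosSemidef) (hQ : Q.PosSemidef)
    (hARE₀ : Aᵀ * P₀ + P₀ * A - P₀ * B * Bᵀ * P₀ = 0)
    (hARE : Aᵀ * P + P * A - P * B * Bᵀ * P = -Q)
    (σ : ℝ) (hσ : 1 ≤ σ)
    (hHur : IsHurwitz (A - σ • (B * Bᵀ * P)))
    (hH : H.IsSymm)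
    (hLyap : (A - σ • (B * Bᵀ * P))ᵀ * H + H * (A - σ • (B * Bᵀ * P)) =
      -(σ ^ 2 • (P * B * Bᵀ * P))) :
    (H - P₀).PosSemidef := by
  have hPt : Pᵀ = P := by
    rw [← Matrix.conjTranspose_eq_transpose_of_trivial]; exact hP.1
  have hP₀t : P₀ᵀ = P₀ := by
    rw [← Matrix.conjTranspose_eq_transpose_of_trivial]; exact hP₀.1
  set G : Matrix (Fin n) (Fin n) ℝ := B * Bᵀ with hG
  have hGt : Gᵀ = G := by rw [hG, Matrix.transpose_mul, Matrix.transpose_transpose]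
  set P' : Matrix (Fin n) (Fin n) ℝ := σ • P with hP'
  have hP't : P'ᵀ = P' := by rw [hP', Matrix.transpose_smul, hPt]
  set D : Matrix (Fin n) (Fin n) ℝ := P' - P₀ with hD
  have hDt : Dᵀ = D := by rw [hD, Matrix.transpose_sub, hP't, hP₀t]
  have hMeq : A - σ • (B * Bᵀ * P) = A - G * P' := by
    rw [hP', mul_smul_comm, hG]
  have hMt : (A - G * P')ᵀ = Aᵀ - P' * G := by
    rw [Matrix.transpose_sub, Matrix.transpose_mul, hGt, hP't]
  -- Lyapunov equation for H in terms of P', G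
  have h1 : (Aᵀ - P' * G) * H + H * (A - G * P') = -(P' * G * P') := by
    rw [← hMt, ← hMeq, hLyap]
    congr 1
    rw [hP', hG]
    simp only [smul_mul_assoc, mul_smul_comm, smul_smul, ← Matrix.mul_assoc]
    rw [sq]
  -- equation for P₀
  have hA0 : Aᵀ * P₀ + P₀ * A = P₀ * G * P₀ := by
    have h0 : Aᵀ * P₀ + P₀ * A = P₀ * B * Bᵀ * P₀ := by
      rw [← sub_eq_zero]; exact hARE₀
    rw [h0, hG]
    simp only [Matrix.mul_assoc]
  have h2 : (Aᵀ - P' * G) * P₀ + P₀ * (A - G * P')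
      = P₀ * G * P₀ - P' * G * P₀ - P₀ * G * P' := by
    have expand : (Aᵀ - P' * G) * P₀ + P₀ * (A - G * P')
        = (Aᵀ * P₀ + P₀ * A) - P' * G * P₀ - P₀ * G * P' := by noncomm_ring
    rw [expand, hA0]
  -- the Lyapunov equation for H - P₀
  have hL : (A - G * P')ᵀ * (H - P₀) + (H - P₀) * (A - G * P') = -(D * G * D) := by
    rw [hMt]
    have expand : (Aᵀ - P' * G) * (H - P₀) + (H - P₀) * (A - G * P')
        = ((Aᵀ - P' * G) * H + H * (A - G * P'))
          - ((Aᵀ - P' * G) * P₀ + P₀ * (A - G * P')) := by noncomm_ring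
    rw [expand, h1, h2, hD]
    noncomm_ring
  rw [hMeq] at hHur
  -- nonnegativity of the quadratic form of D * G * D
  have hR : ∀ y : Fin n → ℝ, 0 ≤ y ⬝ᵥ ((D * G * D) *ᵥ y) := by
    intro y
    have hfact : D * G * D = (D * B) * (D * B)ᵀ := by
      rw [Matrix.transpose_mul, hDt, hG]
      simp only [Matrix.mul_assoc]
    rw [hfact, ← Matrix.mulVec_mulVec, dotProduct_comm, dot_mulVec_left]
    exact Finset.sum_nonneg fun i _ => mul_self_nonneg _
  have hXsymm : (H - P₀).IsSymm := by
    rw [Matrix.IsSymm, Matrix.transpose_sub, hH, hP₀t]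
  exact lyapunov (A - G * P') (H - P₀) (D * G * D) hHur hXsymm hR hL
end

section
/- Under the hypotheses of the previous statement, if moreover for the complete graph each individual quadratic form v^T E_k v ≥ 0 with v chosen appropriately per edge (taking v = e_i − e_j to isolate edge k), then y_k = y_k' for every edge k; i.e., the optimal weight realization with optimal value 1 is unique. -/
open Matrix

private lemma sum_mulVec' {ι n : Type*} [Fintype ι] [Fintype n]
    (f : ι → Matrix n n ℝ) (v : n → ℝ) :
    (∑ i, f i) *ᵥ v = ∑ i, f i *ᵥ v := by
  ext a
  simp only [mulVec, dotProduct, Matrix.sum_apply, Finset.sum_apply, Finset.sum_mul]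
  rw [Finset.sum_comm]

private lemma vecMulVec_mulVec_ones {n : Type*} [Fintype n] (u : n → ℝ)
    (hu : (∑ i, u i) = 0) : vecMulVec u u *ᵥ (fun _ => (1 : ℝ)) = 0 := by
  ext a
  simp only [Matrix.mulVec, Matrix.vecMulVec_apply, dotProduct, mul_one, Pi.zero_apply]
  rw [← Finset.mul_sum, hu, mul_zero]

theorem complete_graph_optimal_weights_unique
    {N : ℕ}
    (E : {p : Fin N × Fin N // p.1 < p.2} → Matrix (Fin N) (Fin N) ℝ)
    (hE : ∀ k, E k = vecMulVec (Pi.single k.1.1 1 - Pi.single k.1.2 1)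
      (Pi.single k.1.1 1 - Pi.single k.1.2 1))
    (y y' : {p : Fin N × Fin N // p.1 < p.2} → ℝ) (y₀ y₀' : ℝ)
    (h1 : ((∑ k, y k • E k) -
      ((1 : Matrix (Fin N) (Fin N) ℝ) - y₀ • Matrix.of (fun _ _ => (1 : ℝ)))).PosSemidef)
    (h2 : ((1 : Matrix (Fin N) (Fin N) ℝ) - ∑ k, y k • E k).PosSemidef)
    (h1' : ((∑ k, y' k • E k) -
      ((1 : Matrix (Fin N) (Fin N) ℝ) - y₀' • Matrix.of (fun _ _ => (1 : ℝ)))).PosSemidef)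
    (h2' : ((1 : Matrix (Fin N) (Fin N) ℝ) - ∑ k, y' k • E k).PosSemidef) :
    ∀ k, y k = y' k := by
  intro k
  set J : Matrix (Fin N) (Fin N) ℝ := Matrix.of (fun _ _ => (1 : ℝ)) with hJdef
  set D : Matrix (Fin N) (Fin N) ℝ := ∑ m, (y m - y' m) • E m with hDdef
  have hD : (∑ m, y m • E m) - (∑ m, y' m • E m) = D := by
    rw [hDdef, ← Finset.sum_sub_distrib]
    congr 1; ext m : 1; rw [sub_smul]
  -- combined PSD facts
  have e1 : (∑ m, y m • E m) - (1 - y₀ • J) + (1 - ∑ m, y' m • E m) = D + y₀ • J := by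
    rw [← hD]; abel
  have e2 : (∑ m, y' m • E m) - (1 - y₀' • J) + (1 - ∑ m, y m • E m) = -D + y₀' • J := by
    rw [← hD]; abel
  have hP : (D + y₀ • J).PosSemidef := e1 ▸ h1.add h2'
  have hP' : (-D + y₀' • J).PosSemidef := e2 ▸ h1'.add h2
  -- each E m kills the all-ones vector
  have hEones : ∀ m : {p : Fin N × Fin N // p.1 < p.2},
      E m *ᵥ (fun _ => (1 : ℝ)) = 0 := by
    intro m
    rw [hE]
    apply vecMulVec_mulVec_ones
    simp [Finset.sum_sub_distrib, Pi.single_apply]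
  have hones : D *ᵥ (fun _ => (1 : ℝ)) = 0 := by
    rw [hDdef, sum_mulVec']
    refine Finset.sum_eq_zero fun m _ => ?_
    rw [Matrix.smul_mulVec, hEones m, smul_zero]
  -- D is symmetric
  have hsym : Dᵀ = D := by
    rw [hDdef, Matrix.transpose_sum]
    congr 1; ext m : 1
    rw [Matrix.transpose_smul]
    congr 1
    rw [hE]
    ext a b
    simp [vecMulVec_apply, mul_comm]
  -- quadratic form vanishes on 1^⊥
  have hq : ∀ v : Fin N → ℝ, (∑ i, v i) = 0 → v ⬝ᵥ D *ᵥ v = 0 := by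
    intro v hv
    have hJv : J *ᵥ v = 0 := by
      ext a
      simp [hJdef, mulVec, dotProduct, hv]
    have t1 := hP.dotProduct_mulVec_nonneg v
    have t2 := hP'.dotProduct_mulVec_nonneg v
    rw [Matrix.add_mulVec, Matrix.smul_mulVec, hJv, smul_zero, add_zero] at t1
    rw [Matrix.add_mulVec, Matrix.smul_mulVec, hJv, smul_zero, add_zero,
      Matrix.neg_mulVec] at t2
    simp only [star_trivial, dotProduct_neg] at t1 t2
    linarith
  -- bilinear form vanishes on 1^⊥
  have hbil : ∀ u w : Fin N → ℝ, (∑ i, u i) = 0 → (∑ i, w i) = 0 →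
      u ⬝ᵥ D *ᵥ w = 0 := by
    intro u w hu hw
    have hsw : w ⬝ᵥ D *ᵥ u = u ⬝ᵥ D *ᵥ w := by
      rw [Matrix.dotProduct_mulVec, ← Matrix.mulVec_transpose, hsym, dotProduct_comm]
    have q1 := hq (u + w) (by simp [Finset.sum_add_distrib, hu, hw])
    have q2 := hq u hu
    have q3 := hq w hw
    simp only [Matrix.mulVec_add, add_dotProduct, dotProduct_add] at q1
    linarith
  -- 1 kills D on the left too
  have h1D : (fun _ => (1 : ℝ)) ᵥ* D = 0 := by
    rw [← hsym, Matrix.vecMul_transpose, hones]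
  -- D = 0 entrywise
  have hzero : ∀ a b : Fin N, D a b = 0 := by
    intro a b
    have hN : (0 : ℕ) < N := a.pos
    have hNne : (N : ℝ) ≠ 0 := Nat.cast_ne_zero.mpr hN.ne'
    set c : Fin N → ℝ := fun _ => 1 / N with hc
    have hsumc : (∑ _i : Fin N, (1 : ℝ) / N) = 1 := by
      rw [Finset.sum_const, Finset.card_univ, Fintype.card_fin, nsmul_eq_mul,
        mul_one_div, div_self hNne]
    have hsum1 : ∀ x : Fin N, (∑ i, ((Pi.single x 1 : Fin N → ℝ) - c) i) = 0 := by
      intro x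
      simp only [Pi.sub_apply, Finset.sum_sub_distrib, hc]
      rw [Finset.sum_pi_single', if_pos (Finset.mem_univ x), hsumc, sub_self]
    have hDc : D *ᵥ c = 0 := by
      have hcs : c = (1 / (N : ℝ)) • (fun _ => (1 : ℝ)) := by
        ext i; simp [hc]
      rw [hcs, Matrix.mulVec_smul, hones, smul_zero]
    have hcD : ∀ x : Fin N → ℝ, c ⬝ᵥ D *ᵥ x = 0 := by
      intro x
      have : c ⬝ᵥ D *ᵥ x = (1 / N) * ((fun _ => (1 : ℝ)) ⬝ᵥ D *ᵥ x) := by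
        simp [hc, dotProduct, Finset.mul_sum]
      rw [this, Matrix.dotProduct_mulVec, h1D, zero_dotProduct, mul_zero]
    have hb := hbil ((Pi.single a 1 : Fin N → ℝ) - c) ((Pi.single b 1 : Fin N → ℝ) - c)
      (hsum1 a) (hsum1 b)
    simp only [Matrix.mulVec_sub, dotProduct_sub, sub_dotProduct, hDc, dotProduct_zero,
      hcD, sub_zero, zero_sub, sub_neg_eq_add, add_zero] at hb
    have : (Pi.single a 1 : Fin N → ℝ) ⬝ᵥ D *ᵥ (Pi.single b 1 : Fin N → ℝ) = D a b := by
      simp [dotProduct, mulVec, Pi.single_apply, Finset.sum_ite_eq']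
    rw [this] at hb
    linarith
  -- compute the (i,j) entry of D for the edge k
  obtain ⟨⟨i, j⟩, hij⟩ := k
  have hentry : D i j = ∑ m : {p : Fin N × Fin N // p.1 < p.2},
      (y m - y' m) * E m i j := by
    rw [hDdef]
    simp [Matrix.sum_apply]
  have hsingle : ∑ m : {p : Fin N × Fin N // p.1 < p.2}, (y m - y' m) * E m i j
      = -(y ⟨(i, j), hij⟩ - y' ⟨(i, j), hij⟩) := by
    rw [Finset.sum_eq_single (⟨(i, j), hij⟩ : {p : Fin N × Fin N // p.1 < p.2})]
    · have : E ⟨(i, j), hij⟩ i j = -1 := by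
        rw [hE]
        simp [vecMulVec_apply, Pi.single_apply, hij.ne, hij.ne']
      rw [this]; ring
    · intro m _ hne
      obtain ⟨⟨a, b⟩, hab⟩ := m
      have hne' : ¬(a = i ∧ b = j) := by
        rintro ⟨rfl, rfl⟩; exact hne rfl
      have hEm : E ⟨(a, b), hab⟩ i j = 0 := by
        rw [hE]
        simp only [vecMulVec_apply, Pi.sub_apply, Pi.single_apply]
        by_cases h1 : i = a
        · subst h1
          have hja : j ≠ i := ne_of_gt hij
          have hjb : j ≠ b := fun h => hne' ⟨rfl, h.symm⟩
          simp [hja, hjb]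
        · by_cases h2 : i = b
          · subst h2
            have hja : j ≠ a := ne_of_gt (lt_trans hab hij)
            have hjb : j ≠ i := ne_of_gt hij
            simp [hja, hjb]
          · simp [h1, h2]
      rw [hEm, mul_zero]
    · intro h; exact absurd (Finset.mem_univ _) h
  have := hzero i j
  rw [hentry, hsingle] at this
  linarith
end

section
/- Monotonicity of ARE solutions: if P₁ and P₂ are the stabilizing positive semidefinite solutions of A^T P + P A − P B B^T P = −Q₁ and A^T P + P A − P B B^T P = −Q₂ respectively, with Q₁ ⪰ Q₂ ⪰ 0 and both A − B B^T P₁ and A − B B^T P₂ Hurwitz, then P₁ ⪰ P₂. -/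
open Matrix NormedSpace Filter Topology

attribute [local instance] Matrix.linftyOpNormedRing Matrix.linftyOpNormedAlgebra

namespace RiccatiAux

lemma tendsto_pow_mul_exp_neg_mul (j : ℕ) {b : ℝ} (hb : 0 < b) :
    Tendsto (fun t : ℝ => t ^ j * Real.exp (-(b * t))) atTop (𝓝 0) := by
  have h1 := (Real.tendsto_pow_mul_exp_neg_atTop_nhds_zero j).comp
    (tendsto_id.const_mul_atTop hb)
  have h2 := h1.const_mul ((b ^ j)⁻¹)
  rw [mul_zero] at h2
  refine h2.congr fun t => ?_
  simp only [Function.comp_apply, id_eq, mul_pow]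
  field_simp

lemma tendsto_scalar (j : ℕ) {μ : ℂ} (hμ : μ.re < 0) :
    Tendsto (fun t : ℝ => Complex.exp ((t:ℂ) * μ) * (((j.factorial : ℂ))⁻¹ * (t:ℂ) ^ j))
      atTop (𝓝 0) := by
  rw [tendsto_zero_iff_norm_tendsto_zero]
  have hb : (0:ℝ) < -μ.re := by linarith
  have key := (tendsto_pow_mul_exp_neg_mul j hb).const_mul ((j.factorial : ℝ))⁻¹
  rw [mul_zero] at key
  apply squeeze_zero_norm' _ key
  filter_upwards [eventually_ge_atTop (0:ℝ)] with t ht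
  have h1 : ‖Complex.exp ((t:ℂ) * μ)‖ = Real.exp (t * μ.re) := by
    rw [Complex.norm_exp]
    congr 1
    simp [Complex.mul_re]
  rw [norm_norm, norm_mul, h1, norm_mul, norm_inv, norm_pow]
  simp only [Complex.norm_natCast, Complex.norm_real, Real.norm_eq_abs, abs_of_nonneg ht]
  have : t * μ.re = -(-μ.re * t) := by ring
  rw [this]
  exact le_of_eq (by ring)

/-- The continuous linear map `X ↦ X *ᵥ v` on square matrices. -/
noncomputable def mulVecCLM {n : ℕ} (𝕜 : Type*) [NontriviallyNormedField 𝕜]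
    [CompleteSpace 𝕜] (v : Fin n → 𝕜) :
    Matrix (Fin n) (Fin n) 𝕜 →L[𝕜] (Fin n → 𝕜) :=
  LinearMap.toContinuousLinearMap
    { toFun := fun X => X.mulVec v
      map_add' := fun X Y => Matrix.add_mulVec X Y v
      map_smul' := fun c X => by simp [Matrix.smul_mulVec] }

@[simp] lemma mulVecCLM_apply {n : ℕ} {𝕜 : Type*} [NontriviallyNormedField 𝕜]
    [CompleteSpace 𝕜] (v : Fin n → 𝕜) (X : Matrix (Fin n) (Fin n) 𝕜) :
    mulVecCLM 𝕜 v X = X.mulVec v := by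
  simp [mulVecCLM]

/-- exp applied to a vector killed by a power of the matrix. -/
lemma exp_mulVec_of_pow_eq_zero {n k : ℕ} (N : Matrix (Fin n) (Fin n) ℂ)
    (v : Fin n → ℂ) (hv : (N ^ k).mulVec v = 0) (t : ℂ) :
    (exp (t • N)).mulVec v
      = ∑ j ∈ Finset.range k, ((j.factorial : ℂ)⁻¹ * t ^ j) • (N ^ j).mulVec v := by
  have hsum := expSeries_summable' (𝕂 := ℂ) (t • N)
  have h1 := (mulVecCLM ℂ v).map_tsum hsum
  simp only [mulVecCLM_apply] at h1
  have h0 : (exp (t • N)).mulVec v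
      = ∑' j : ℕ, (((j.factorial : ℂ)⁻¹) • (t • N) ^ j).mulVec v := by
    rw [exp_eq_tsum ℂ]; exact h1
  rw [h0, tsum_eq_sum (s := Finset.range k)]
  · refine Finset.sum_congr rfl fun j hj => ?_
    simp [smul_pow, Matrix.smul_mulVec, smul_smul, mul_comm]
  · intro j hj
    simp only [Finset.mem_range, not_lt] at hj
    have hz : (N ^ j).mulVec v = 0 := by
      have e : N ^ j = N ^ (j - k) * N ^ k := by
        rw [← pow_add]; congr 1; omega
      rw [e, ← Matrix.mulVec_mulVec, hv, Matrix.mulVec_zero]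
    simp [smul_pow, Matrix.smul_mulVec, hz]

lemma exp_split {n : ℕ} (M : Matrix (Fin n) (Fin n) ℂ) (μ : ℂ) (t : ℝ) :
    exp ((t : ℂ) • M)
      = Complex.exp ((t : ℂ) * μ) • exp ((t : ℂ) • (M - μ • 1)) := by
  have hc : Commute (((t : ℂ) * μ) • (1 : Matrix (Fin n) (Fin n) ℂ))
      ((t : ℂ) • (M - μ • 1)) :=
    ((Commute.one_left _).smul_left _).smul_right _
  have hsplit : (t : ℂ) • M
      = ((t : ℂ) * μ) • (1 : Matrix (Fin n) (Fin n) ℂ) + (t : ℂ) • (M - μ • 1) := by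
    rw [smul_sub, mul_smul, smul_smul (t:ℂ) μ]
    abel
  rw [hsplit, Matrix.exp_add_of_commute _ _ hc,
    (Algebra.algebraMap_eq_smul_one ((t:ℂ)*μ)).symm]
  erw [← algebraMap_exp_comm]
  rw [Algebra.algebraMap_eq_smul_one, smul_mul_assoc, one_mul, Complex.exp_eq_exp_ℂ]

/-- Decay of `exp (t M) v` for a generalized eigenvector `v`. -/
lemma tendsto_exp_mulVec_of_genEigen {n k : ℕ} (M : Matrix (Fin n) (Fin n) ℂ)
    {μ : ℂ} (hμ : μ.re < 0) (v : Fin n → ℂ)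
    (hv : ((M - μ • 1) ^ k).mulVec v = 0) :
    Tendsto (fun t : ℝ => (exp ((t:ℂ) • M)).mulVec v) atTop (𝓝 0) := by
  have key : ∀ t : ℝ, (exp ((t:ℂ) • M)).mulVec v
      = ∑ j ∈ Finset.range k,
          (Complex.exp ((t:ℂ) * μ) * ((j.factorial : ℂ)⁻¹ * (t:ℂ) ^ j)) •
            ((M - μ • 1) ^ j).mulVec v := by
    intro t
    rw [exp_split M μ t, Matrix.smul_mulVec,
      exp_mulVec_of_pow_eq_zero _ v hv, Finset.smul_sum]
    refine Finset.sum_congr rfl fun j _ => ?_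
    rw [smul_smul]
  simp only [key]
  have h0 : (0 : Fin n → ℂ) = ∑ j ∈ Finset.range k, (0 : Fin n → ℂ) := by simp
  rw [h0]
  refine tendsto_finset_sum _ fun j _ => ?_
  have := (tendsto_scalar j hμ).smul_const (((M - μ • 1) ^ j).mulVec v)
  simpa using this

/-- Decay of `exp (t M) v` for all `v`, when all eigenvalues of `M` have negative real part. -/
lemma tendsto_exp_mulVec_of_spectrum {n : ℕ} (M : Matrix (Fin n) (Fin n) ℂ)
    (h : ∀ μ ∈ spectrum ℂ M, μ.re < 0) (v : Fin n → ℂ) :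
    Tendsto (fun t : ℝ => (exp ((t:ℂ) • M)).mulVec v) atTop (𝓝 0) := by
  set S : Submodule ℂ (Fin n → ℂ) :=
    { carrier := {w | Tendsto (fun t : ℝ => (exp ((t:ℂ) • M)).mulVec w) atTop (𝓝 0)}
      zero_mem' := by simp [tendsto_const_nhds]
      add_mem' := by
        intro a b ha hb
        have := ha.add hb
        rw [add_zero] at this
        simpa [Matrix.mulVec_add] using this
      smul_mem' := by
        intro c a ha
        have := ha.const_smul c
        rw [smul_zero] at this
        simpa [Matrix.mulVec_smul] using this } with hS
  suffices hsuff : S = ⊤ by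
    have : v ∈ S := hsuff ▸ Submodule.mem_top
    exact this
  rw [eq_top_iff, ← Module.End.iSup_maxGenEigenspace_eq_top (Matrix.mulVecLin M)]
  refine iSup_le fun μ => fun w hw => ?_
  rcases eq_or_ne w 0 with rfl | hw0
  · exact S.zero_mem
  -- μ is in the spectrum
  rw [Module.End.mem_maxGenEigenspace] at hw
  obtain ⟨k, hk⟩ := hw
  have hspec : spectrum ℂ (Matrix.mulVecLin M) = spectrum ℂ M :=
    (AlgEquiv.spectrum_eq (Matrix.toLinAlgEquiv' (R := ℂ) (n := Fin n)) M).symm ▸ rfl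
  have hμmem : μ ∈ spectrum ℂ M := by
    rw [← hspec]
    refine Module.End.HasEigenvalue.mem_spectrum
      (Module.End.hasEigenvalue_of_hasGenEigenvalue (k := k) ?_)
    show Module.End.genEigenspace _ μ (k : ℕ∞) ≠ ⊥
    rw [Submodule.ne_bot_iff]
    exact ⟨w, Module.End.mem_genEigenspace.mpr ⟨k, le_refl _, LinearMap.mem_ker.mpr hk⟩, hw0⟩
  have hμre := h μ hμmem
  -- translate to matrix form
  have hmk : ((M - μ • 1) ^ k).mulVec w = 0 := by
    have e : Matrix.toLinAlgEquiv' ((M - μ • (1 : Matrix (Fin n) (Fin n) ℂ)) ^ k)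
        = (Matrix.mulVecLin M - μ • 1) ^ k := by
      rw [map_pow, map_sub, _root_.map_smul, _root_.map_one]
      rfl
    calc ((M - μ • 1) ^ k).mulVec w
        = Matrix.toLinAlgEquiv' ((M - μ • 1) ^ k) w := rfl
      _ = 0 := by rw [e, hk]
  exact tendsto_exp_mulVec_of_genEigen M hμre w hmk

end RiccatiAux

namespace RiccatiAux

lemma exp_map_ofReal {n : ℕ} (M : Matrix (Fin n) (Fin n) ℝ) (t : ℝ) :
    (exp (t • M)).map Complex.ofReal = exp ((t : ℂ) • M.map Complex.ofReal) := by
  have hcont : Continuous fun A : Matrix (Fin n) (Fin n) ℝ => A.map Complex.ofReal := by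
    apply continuous_pi; intro i; apply continuous_pi; intro j
    exact Complex.continuous_ofReal.comp ((continuous_apply j).comp (continuous_apply i))
  have h1 := map_exp (Complex.ofRealHom.mapMatrix :
      Matrix (Fin n) (Fin n) ℝ →+* Matrix (Fin n) (Fin n) ℂ) hcont (t • M)
  have h2 : (Complex.ofRealHom.mapMatrix (t • M) : Matrix (Fin n) (Fin n) ℂ)
      = (t : ℂ) • M.map Complex.ofReal := by
    ext i j; simp [Matrix.smul_apply, Complex.ofReal_mul]
  calc (exp (t • M)).map Complex.ofReal
      = Complex.ofRealHom.mapMatrix (exp (t • M)) := rfl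
    _ = exp (Complex.ofRealHom.mapMatrix (t • M)) := h1
    _ = exp ((t:ℂ) • M.map Complex.ofReal) := by rw [h2]

/-- Real version: `exp (t M) v → 0` when the complexification of `M` has spectrum in the
open left half plane. -/
lemma tendsto_exp_smul_mulVec_real {n : ℕ} {M : Matrix (Fin n) (Fin n) ℝ}
    (h : ∀ μ ∈ spectrum ℂ (M.map Complex.ofReal), μ.re < 0) (v : Fin n → ℝ) :
    Tendsto (fun t : ℝ => (exp (t • M)).mulVec v) atTop (𝓝 0) := by
  have hw := tendsto_exp_mulVec_of_spectrum (M.map Complex.ofReal) h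
    (fun j => (v j : ℂ))
  rw [tendsto_pi_nhds] at hw ⊢
  intro i
  have hre := (Complex.continuous_re.tendsto 0).comp (hw i)
  simp only [Complex.zero_re] at hre
  refine hre.congr fun t => ?_
  have hentry : ((exp ((t:ℂ) • M.map Complex.ofReal)).mulVec (fun j => (v j : ℂ))) i
      = (((exp (t • M)).mulVec v i : ℝ) : ℂ) := by
    rw [← exp_map_ofReal M t]
    exact (RingHom.map_mulVec Complex.ofRealHom (exp (t • M)) v i).symm
  simp only [Function.comp_apply, hentry, Complex.ofReal_re]

end RiccatiAux


namespace RiccatiAux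

lemma hasDerivAt_dotProduct {n : ℕ} {u w : ℝ → Fin n → ℝ} {u' w' : Fin n → ℝ} {t : ℝ}
    (hu : HasDerivAt u u' t) (hw : HasDerivAt w w' t) :
    HasDerivAt (fun s => u s ⬝ᵥ w s) (u' ⬝ᵥ w t + u t ⬝ᵥ w') t := by
  have hcomp : ∀ i : Fin n, HasDerivAt (fun s => u s i * w s i)
      (u' i * w t i + u t i * w' i) t := by
    intro i
    have hui : HasDerivAt (fun s => u s i) (u' i) t :=
      (ContinuousLinearMap.proj (R := ℝ) (φ := fun _ : Fin n => ℝ) i).hasFDerivAt.comp_hasDerivAt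
        t hu
    have hwi : HasDerivAt (fun s => w s i) (w' i) t :=
      (ContinuousLinearMap.proj (R := ℝ) (φ := fun _ : Fin n => ℝ) i).hasFDerivAt.comp_hasDerivAt
        t hw
    exact hui.mul hwi
  have hsum := HasDerivAt.fun_sum (u := Finset.univ) (fun i _ => hcomp i)
  have he : ∑ i : Fin n, (u' i * w t i + u t i * w' i) = u' ⬝ᵥ w t + u t ⬝ᵥ w' := by
    rw [Finset.sum_add_distrib]; rfl
  rw [he] at hsum
  exact hsum

lemma hasDerivAt_flow {n : ℕ} (M : Matrix (Fin n) (Fin n) ℝ) (v : Fin n → ℝ) (t : ℝ) :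
    HasDerivAt (fun s : ℝ => (exp (s • M)).mulVec v)
      (M.mulVec ((exp (t • M)).mulVec v)) t := by
  have hE : HasDerivAt (fun s : ℝ => exp (s • M)) (exp (t • M) * M) t :=
    hasDerivAt_exp_smul_const (𝕂 := ℝ) M t
  have h := (mulVecCLM ℝ v).hasFDerivAt.comp_hasDerivAt t hE
  have hc : Commute M (exp (t • M)) := ((Commute.refl M).smul_right t).exp_right
  have he : mulVecCLM ℝ v (exp (t • M) * M) = M.mulVec ((exp (t • M)).mulVec v) := by
    rw [mulVecCLM_apply, ← hc.eq, ← Matrix.mulVec_mulVec]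
  replace h := h.congr_deriv he
  exact h.congr_of_eventuallyEq (by filter_upwards with s; simp)

/-- Lyapunov-type positivity: if `M` is Hurwitz, `X` symmetric, `R ⪰ 0` and
`Mᵀ X + X M = -R`, then `X ⪰ 0`. -/
lemma lyapunov {n : ℕ} {M X R : Matrix (Fin n) (Fin n) ℝ}
    (hM : ∀ μ ∈ spectrum ℂ (M.map Complex.ofReal), μ.re < 0)
    (hX : X.IsHermitian) (hR : R.PosSemidef)
    (heq : Mᵀ * X + X * M = -R) : X.PosSemidef := by
  refine .of_dotProduct_mulVec_nonneg hX fun v => ?_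
  simp only [star_trivial]
  set x : ℝ → Fin n → ℝ := fun t => (exp (t • M)).mulVec v with hx
  set f : ℝ → ℝ := fun t => x t ⬝ᵥ X.mulVec (x t) with hf
  have hx0 : x 0 = v := by simp [hx]
  have hderiv : ∀ t, HasDerivAt f (-(x t ⬝ᵥ R.mulVec (x t))) t := by
    intro t
    have hx' := hasDerivAt_flow M v t
    have hXx : HasDerivAt (fun s => X.mulVec (x s)) (X.mulVec (M.mulVec (x t))) t := by
      have hL := (LinearMap.toContinuousLinearMap (Matrix.mulVecLin X)).hasFDerivAt.comp_hasDerivAt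
        t hx'
      exact hL
    have hd := hasDerivAt_dotProduct hx' hXx
    have halg : (M.mulVec (x t)) ⬝ᵥ X.mulVec (x t) + x t ⬝ᵥ X.mulVec (M.mulVec (x t))
        = -(x t ⬝ᵥ R.mulVec (x t)) := by
      have h1 : x t ⬝ᵥ ((Mᵀ * X + X * M).mulVec (x t)) = -(x t ⬝ᵥ R.mulVec (x t)) := by
        rw [heq, Matrix.neg_mulVec, dotProduct_neg]
      rw [Matrix.add_mulVec, dotProduct_add, ← Matrix.mulVec_mulVec,
        ← Matrix.mulVec_mulVec, dotProduct_mulVec (x t) Mᵀ,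
        Matrix.vecMul_transpose] at h1
      exact h1
    rw [← halg]
    exact hd
  have hmono : Antitone f := by
    refine antitone_of_deriv_nonpos (fun t => (hderiv t).differentiableAt) fun t => ?_
    rw [(hderiv t).deriv]
    have := hR.dotProduct_mulVec_nonneg (x t)
    simp only [star_trivial] at this
    linarith
  have hxinf : Filter.Tendsto x Filter.atTop (𝓝 0) := tendsto_exp_smul_mulVec_real hM v
  have hg : Continuous fun a : Fin n → ℝ => a ⬝ᵥ X.mulVec a := by
    have hrepr : (fun a : Fin n → ℝ => a ⬝ᵥ X.mulVec a)
        = fun a : Fin n → ℝ => ∑ i, a i * ∑ j, X i j * a j := by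
      funext a; simp [dotProduct, Matrix.mulVec]
    rw [hrepr]
    exact continuous_finset_sum _ fun i _ => (continuous_apply i).mul
      (continuous_finset_sum _ fun j _ => continuous_const.mul (continuous_apply j))
  have hfinf : Filter.Tendsto f Filter.atTop (𝓝 0) := by
    have h0 : (0 : Fin n → ℝ) ⬝ᵥ X.mulVec 0 = 0 := by simp
    have hcmp := (hg.tendsto 0).comp hxinf
    rw [h0] at hcmp
    exact hcmp
  have hle : ∀ᶠ t in Filter.atTop, f t ≤ f 0 := by
    filter_upwards [Filter.eventually_ge_atTop (0:ℝ)] with t ht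
    exact hmono ht
  have h0le : (0:ℝ) ≤ f 0 := le_of_tendsto hfinf hle
  have hfv : f 0 = v ⬝ᵥ X.mulVec v := by rw [hf]; simp [hx0]
  linarith [hfv ▸ h0le]

end RiccatiAux

theorem riccati_solution_monotone
    {n m : ℕ} (A : Matrix (Fin n) (Fin n) ℝ) (B : Matrix (Fin n) (Fin m) ℝ)
    (P₁ P₂ Q₁ Q₂ : Matrix (Fin n) (Fin n) ℝ)
    (hP₁ : P₁.PosSemidef) (hP₂ : P₂.PosSemidef)
    (hQ₂ : Q₂.PosSemidef) (hQ : (Q₁ - Q₂).PosSemidef)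
    (hARE₁ : Aᵀ * P₁ + P₁ * A - P₁ * B * Bᵀ * P₁ = -Q₁)
    (hARE₂ : Aᵀ * P₂ + P₂ * A - P₂ * B * Bᵀ * P₂ = -Q₂)
    (hHur₁ : IsHurwitz (A - B * Bᵀ * P₁))
    (hHur₂ : IsHurwitz (A - B * Bᵀ * P₂)) :
    (P₁ - P₂).PosSemidef := by
  have hP1t : P₁ᵀ = P₁ := by
    rw [← Matrix.conjTranspose_eq_transpose_of_trivial]; exact hP₁.1
  have hXsym : (P₁ - P₂).IsHermitian := hP₁.1.sub hP₂.1
  have hXt : (P₁ - P₂)ᵀ = P₁ - P₂ := by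
    rw [← Matrix.conjTranspose_eq_transpose_of_trivial]; exact hXsym
  have hRpsd : ((Q₁ - Q₂) + (P₁ - P₂) * (B * Bᵀ) * (P₁ - P₂)).PosSemidef := by
    refine hQ.add ?_
    have h := Matrix.posSemidef_conjTranspose_mul_self (Bᵀ * (P₁ - P₂))
    have e : (Bᵀ * (P₁ - P₂))ᴴ * (Bᵀ * (P₁ - P₂)) = (P₁ - P₂) * (B * Bᵀ) * (P₁ - P₂) := by
      rw [Matrix.conjTranspose_eq_transpose_of_trivial, Matrix.transpose_mul,
        Matrix.transpose_transpose, hXt]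
      simp only [Matrix.mul_assoc]
    rwa [e] at h
  have key : (A - B * Bᵀ * P₁)ᵀ * (P₁ - P₂) + (P₁ - P₂) * (A - B * Bᵀ * P₁)
      = (Aᵀ * P₁ + P₁ * A - P₁ * B * Bᵀ * P₁)
        - (Aᵀ * P₂ + P₂ * A - P₂ * B * Bᵀ * P₂)
        - (P₁ - P₂) * (B * Bᵀ) * (P₁ - P₂) := by
    simp only [Matrix.transpose_sub, Matrix.transpose_mul, Matrix.transpose_transpose,
      hP1t, Matrix.sub_mul, Matrix.mul_sub, Matrix.add_mul, Matrix.mul_add,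
      Matrix.mul_assoc]
    abel
  have heq : (A - B * Bᵀ * P₁)ᵀ * (P₁ - P₂) + (P₁ - P₂) * (A - B * Bᵀ * P₁)
      = -((Q₁ - Q₂) + (P₁ - P₂) * (B * Bᵀ) * (P₁ - P₂)) := by
    rw [key, hARE₁, hARE₂]
    abel
  exact RiccatiAux.lyapunov hHur₁ hXsym hRpsd heq
end
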